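/- arXiv:2501.09656 — 5 statements merged into one kernel-verified Lean document; each statement's English description precedes it below -/
import Mathlib

section
/- The stable self-similar Burgers profile \(\overline{W}\) is differentiable on \(\mathbb{R}\) and its derivative satisfies \(\overline{W}'(y) = -\dfrac{1}{1 + 3\,\overline{W}(y)^2}\) for every real y; in particular \(\overline{W}'(y) < 0\) for all y, so \(\overline{W}\) is strictly decreasing. -/
/-- The stable self-similar Burgers profile. -/
noncomputable def burgersW (y : ℝ) : ℝ :=
  (-(y / 2) + Real.sqrt (1 / 27 + y ^ 2 / 4)) ^ ((1 : ℝ) / 3)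
    - (y / 2 + Real.sqrt (1 / 27 + y ^ 2 / 4)) ^ ((1 : ℝ) / 3)

lemma sqrt_pos_facts (y : ℝ) :
    0 < -(y / 2) + Real.sqrt (1 / 27 + y ^ 2 / 4) ∧
    0 < y / 2 + Real.sqrt (1 / 27 + y ^ 2 / 4) := by
  set s := Real.sqrt (1 / 27 + y ^ 2 / 4) with hsdef
  have hnn : (0:ℝ) ≤ 1 / 27 + y ^ 2 / 4 := by positivity
  have hs2 : s ^ 2 = 1 / 27 + y ^ 2 / 4 := Real.sq_sqrt hnn
  have hspos : 0 < s := Real.sqrt_pos.mpr (by positivity)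
  constructor <;> nlinarith [sq_nonneg (s - y/2), sq_nonneg (s + y/2)]

lemma burgersW_cubic (y : ℝ) : burgersW y ^ 3 + burgersW y = -y := by
  set s := Real.sqrt (1 / 27 + y ^ 2 / 4) with hsdef
  have hnn : (0:ℝ) ≤ 1 / 27 + y ^ 2 / 4 := by positivity
  have hs2 : s ^ 2 = 1 / 27 + y ^ 2 / 4 := Real.sq_sqrt hnn
  obtain ⟨ha, hb⟩ := sqrt_pos_facts y
  set a := -(y / 2) + s with hadef
  set b := y / 2 + s with hbdef
  set u := a ^ ((1:ℝ)/3) with hudef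
  set v := b ^ ((1:ℝ)/3) with hvdef
  have hu3 : u ^ 3 = a := by
    rw [hudef, ← Real.rpow_natCast (a ^ ((1:ℝ)/3)) 3, ← Real.rpow_mul ha.le]
    norm_num
  have hv3 : v ^ 3 = b := by
    rw [hvdef, ← Real.rpow_natCast (b ^ ((1:ℝ)/3)) 3, ← Real.rpow_mul hb.le]
    norm_num
  have hab : a * b = 1 / 27 := by
    rw [hadef, hbdef]; nlinarith
  have huv : u * v = 1 / 3 := by
    rw [hudef, hvdef, ← Real.mul_rpow ha.le hb.le, hab,
      show (1/27:ℝ) = (1/3)^(3:ℕ) by norm_num,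
      ← Real.rpow_natCast (1/3 : ℝ) 3, ← Real.rpow_mul (by norm_num)]
    norm_num
  have hW : burgersW y = u - v := rfl
  have hab' : a - b = -y := by rw [hadef, hbdef]; ring
  have hexp : (u - v) ^ 3 = u ^ 3 - v ^ 3 - 3 * (u * v) * (u - v) := by ring
  rw [hW]
  rw [hexp, hu3, hv3, huv]
  linarith

lemma burgersW_continuous : Continuous burgersW := by
  have h1 : Continuous fun y : ℝ => Real.sqrt (1 / 27 + y ^ 2 / 4) :=
    Real.continuous_sqrt.comp (by continuity)
  have hr : Continuous fun x : ℝ => x ^ ((1:ℝ)/3) := by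
    rw [continuous_iff_continuousAt]
    intro x
    exact Real.continuousAt_rpow_const x _ (Or.inr (by norm_num))
  unfold burgersW
  exact ((hr.comp (by continuity)).sub (hr.comp (by continuity)))

lemma burgersW_hasDerivAt (y : ℝ) :
    HasDerivAt burgersW (-(1 / (1 + 3 * burgersW y ^ 2))) y := by
  set W := burgersW y with hW
  have hf : HasDerivAt (fun w : ℝ => -(w ^ 3 + w)) (-(3 * W ^ 2 + 1)) W := by
    have := ((hasDerivAt_pow 3 W).add (hasDerivAt_id W)).neg
    exact this.congr_deriv (by norm_num)
  have hfg : ∀ᶠ z in nhds y, (fun w : ℝ => -(w ^ 3 + w)) (burgersW z) = z := by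
    filter_upwards with z
    have := burgersW_cubic z
    show -(burgersW z ^ 3 + burgersW z) = z
    linarith
  have hd : 0 < 1 + 3 * W ^ 2 := by positivity
  have := HasDerivAt.of_local_left_inverse burgersW_continuous.continuousAt hf
    (by nlinarith) hfg
  refine this.congr_deriv ?_
  rw [← neg_inv]
  rw [neg_inj, inv_eq_one_div]
  ring_nf

/-- `W̄` is differentiable on `ℝ`, its derivative equals `-1 / (1 + 3 W̄(y)²)` everywhere;
in particular the derivative is negative everywhere and `W̄` is strictly decreasing. -/
theorem burgersW_hasDeriv :
    Differentiable ℝ burgersW ∧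
      (∀ y : ℝ, deriv burgersW y = -(1 / (1 + 3 * burgersW y ^ 2))) ∧
      (∀ y : ℝ, deriv burgersW y < 0) ∧
      StrictAnti burgersW := by
  have hdiff : Differentiable ℝ burgersW := fun y =>
    (burgersW_hasDerivAt y).differentiableAt
  have hderiv : ∀ y : ℝ, deriv burgersW y = -(1 / (1 + 3 * burgersW y ^ 2)) :=
    fun y => (burgersW_hasDerivAt y).deriv
  have hneg : ∀ y : ℝ, deriv burgersW y < 0 := by
    intro y
    rw [hderiv y]
    have h1 : 0 < 1 / (1 + 3 * burgersW y ^ 2) := by positivity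
    linarith
  exact ⟨hdiff, hderiv, hneg, strictAnti_of_deriv_neg hneg⟩
end

section
/- For every nonzero real y, the stable self-similar Burgers profile satisfies the auxiliary estimate \(\tfrac{5}{2} + 3\,\overline{W}'(y) + \dfrac{1}{y(1+y^2)}\Big(\tfrac{3y}{2} + \overline{W}(y)\Big) \ge \dfrac{y^2}{1+y^2}\). -/
private lemma bw_arg_pos (y : ℝ) : 0 < 1 / 27 + y ^ 2 / 4 := by positivity

private lemma bw_s_pos (y : ℝ) : 0 < Real.sqrt (1 / 27 + y ^ 2 / 4) :=
  Real.sqrt_pos.mpr (bw_arg_pos y)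

private lemma bw_s_sq (y : ℝ) : Real.sqrt (1 / 27 + y ^ 2 / 4) ^ 2 = 1 / 27 + y ^ 2 / 4 :=
  Real.sq_sqrt (bw_arg_pos y).le

private lemma bw_a_pos (y : ℝ) : 0 < -(y / 2) + Real.sqrt (1 / 27 + y ^ 2 / 4) := by
  nlinarith [bw_s_sq y, bw_s_pos y, sq_nonneg (Real.sqrt (1 / 27 + y ^ 2 / 4) - y/2)]

private lemma bw_b_pos (y : ℝ) : 0 < y / 2 + Real.sqrt (1 / 27 + y ^ 2 / 4) := by
  nlinarith [bw_s_sq y, bw_s_pos y, sq_nonneg (Real.sqrt (1 / 27 + y ^ 2 / 4) + y/2)]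

private lemma bw_cube {x : ℝ} (hx : 0 < x) : (x ^ ((1:ℝ)/3)) ^ 3 = x := by
  rw [← Real.rpow_natCast (x ^ ((1:ℝ)/3)) 3, ← Real.rpow_mul hx.le]
  norm_num

private lemma bw_mul (y : ℝ) :
    (-(y / 2) + Real.sqrt (1 / 27 + y ^ 2 / 4)) ^ ((1:ℝ)/3) *
      (y / 2 + Real.sqrt (1 / 27 + y ^ 2 / 4)) ^ ((1:ℝ)/3) = 1 / 3 := by
  rw [← Real.mul_rpow (bw_a_pos y).le (bw_b_pos y).le]
  have h : (-(y / 2) + Real.sqrt (1 / 27 + y ^ 2 / 4)) *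
      (y / 2 + Real.sqrt (1 / 27 + y ^ 2 / 4)) = 1 / 27 := by
    nlinarith [bw_s_sq y]
  rw [h]
  have h27 : ((1:ℝ)/27) = (1/3 : ℝ) ^ (3:ℕ) := by norm_num
  rw [h27, ← Real.rpow_natCast ((1:ℝ)/3) 3, ← Real.rpow_mul (by norm_num)]
  norm_num

private lemma bw_cubic (y : ℝ) : burgersW y ^ 3 + burgersW y + y = 0 := by
  have hA3 := bw_cube (bw_a_pos y)
  have hB3 := bw_cube (bw_b_pos y)
  have hAB := bw_mul y
  have hW : burgersW y = (-(y / 2) + Real.sqrt (1 / 27 + y ^ 2 / 4)) ^ ((1:ℝ)/3)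
      - (y / 2 + Real.sqrt (1 / 27 + y ^ 2 / 4)) ^ ((1:ℝ)/3) := rfl
  rw [hW]
  set A := (-(y / 2) + Real.sqrt (1 / 27 + y ^ 2 / 4)) ^ ((1:ℝ)/3)
  set B := (y / 2 + Real.sqrt (1 / 27 + y ^ 2 / 4)) ^ ((1:ℝ)/3)
  have expand : (A - B) ^ 3 = A ^ 3 - B ^ 3 - 3 * (A * B) * (A - B) := by ring
  rw [expand, hA3, hB3, hAB]
  ring

private lemma bw_k1 (y s : ℝ) (hs : s ≠ 0) :
    -(1/2 : ℝ) + y / (4 * s) = -(-(y/2) + s) / (2 * s) := by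
  field_simp; ring

private lemma bw_k2 (y s : ℝ) (hs : s ≠ 0) :
    (1/2 : ℝ) + y / (4 * s) = (y/2 + s) / (2 * s) := by
  field_simp; ring

private lemma bw_alg (s a b A B : ℝ) (hs : s ≠ 0) (ha : a ≠ 0) (hb : b ≠ 0) :
    (1:ℝ)/3 * (A / a) * (-a / (2 * s)) - (1:ℝ)/3 * (B / b) * (b / (2 * s))
      = -((A + B) / (6 * s)) := by
  field_simp; ring

private lemma bw_hasDerivAt (y : ℝ) :
    HasDerivAt burgersW
      (-(((-(y / 2) + Real.sqrt (1 / 27 + y ^ 2 / 4)) ^ ((1:ℝ)/3)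
          + (y / 2 + Real.sqrt (1 / 27 + y ^ 2 / 4)) ^ ((1:ℝ)/3))
        / (6 * Real.sqrt (1 / 27 + y ^ 2 / 4)))) y := by
  have hspos := bw_s_pos y
  have hapos := bw_a_pos y
  have hbpos := bw_b_pos y
  have hinner : HasDerivAt (fun y : ℝ => 1 / 27 + y ^ 2 / 4) (y / 2) y := by
    have h : HasDerivAt (fun y : ℝ => y ^ 2) (2 * y) y := by
      simpa using (hasDerivAt_pow 2 y)
    have := (h.div_const 4).const_add (1/27 : ℝ)
    exact this.congr_deriv (by ring)
  have hsqrt : HasDerivAt (fun y : ℝ => Real.sqrt (1 / 27 + y ^ 2 / 4))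
      (y / (4 * Real.sqrt (1 / 27 + y ^ 2 / 4))) y := by
    have := (Real.hasDerivAt_sqrt (bw_arg_pos y).ne').comp y hinner
    refine this.congr_deriv ?_
    generalize Real.sqrt (1 / 27 + y ^ 2 / 4) = s
    ring
  have ha : HasDerivAt (fun y : ℝ => -(y / 2) + Real.sqrt (1 / 27 + y ^ 2 / 4))
      (-(1/2) + y / (4 * Real.sqrt (1 / 27 + y ^ 2 / 4))) y := by
    have h1 : HasDerivAt (fun y : ℝ => -(y / 2)) (-(1/2)) y := by
      have := ((hasDerivAt_id y).div_const 2).neg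
      exact this
    exact h1.add hsqrt
  have hb : HasDerivAt (fun y : ℝ => y / 2 + Real.sqrt (1 / 27 + y ^ 2 / 4))
      (1/2 + y / (4 * Real.sqrt (1 / 27 + y ^ 2 / 4))) y := by
    have h1 : HasDerivAt (fun y : ℝ => y / 2) (1/2) y := by
      have := (hasDerivAt_id y).div_const 2
      exact this
    exact h1.add hsqrt
  have hrpa := (Real.hasDerivAt_rpow_const (x := -(y / 2) + Real.sqrt (1 / 27 + y ^ 2 / 4))
      (p := (1:ℝ)/3) (Or.inl hapos.ne')).comp y ha
  have hrpb := (Real.hasDerivAt_rpow_const (x := y / 2 + Real.sqrt (1 / 27 + y ^ 2 / 4))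
      (p := (1:ℝ)/3) (Or.inl hbpos.ne')).comp y hb
  have hW := hrpa.sub hrpb
  refine hW.congr_deriv ?_
  have hra : (-(y / 2) + Real.sqrt (1 / 27 + y ^ 2 / 4)) ^ ((1:ℝ)/3 - 1)
      = (-(y / 2) + Real.sqrt (1 / 27 + y ^ 2 / 4)) ^ ((1:ℝ)/3)
        / (-(y / 2) + Real.sqrt (1 / 27 + y ^ 2 / 4)) := by
    rw [Real.rpow_sub hapos, Real.rpow_one]
  have hrb : (y / 2 + Real.sqrt (1 / 27 + y ^ 2 / 4)) ^ ((1:ℝ)/3 - 1)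
      = (y / 2 + Real.sqrt (1 / 27 + y ^ 2 / 4)) ^ ((1:ℝ)/3)
        / (y / 2 + Real.sqrt (1 / 27 + y ^ 2 / 4)) := by
    rw [Real.rpow_sub hbpos, Real.rpow_one]
  rw [hra, hrb, bw_k1 y _ hspos.ne', bw_k2 y _ hspos.ne',
    bw_alg _ _ _ _ _ hspos.ne' hapos.ne' hbpos.ne']

private lemma bw_deriv (y : ℝ) :
    deriv burgersW y = -(1 / (1 + 3 * burgersW y ^ 2)) := by
  have hA3 := bw_cube (bw_a_pos y)
  have hB3 := bw_cube (bw_b_pos y)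
  have hAB := bw_mul y
  have hApos : 0 < (-(y / 2) + Real.sqrt (1 / 27 + y ^ 2 / 4)) ^ ((1:ℝ)/3) :=
    Real.rpow_pos_of_pos (bw_a_pos y) _
  have hBpos : 0 < (y / 2 + Real.sqrt (1 / 27 + y ^ 2 / 4)) ^ ((1:ℝ)/3) :=
    Real.rpow_pos_of_pos (bw_b_pos y) _
  have hder := (bw_hasDerivAt y).deriv
  rw [hder]
  have hW : burgersW y = (-(y / 2) + Real.sqrt (1 / 27 + y ^ 2 / 4)) ^ ((1:ℝ)/3)
      - (y / 2 + Real.sqrt (1 / 27 + y ^ 2 / 4)) ^ ((1:ℝ)/3) := rfl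
  rw [hW]
  set A := (-(y / 2) + Real.sqrt (1 / 27 + y ^ 2 / 4)) ^ ((1:ℝ)/3)
  set B := (y / 2 + Real.sqrt (1 / 27 + y ^ 2 / 4)) ^ ((1:ℝ)/3)
  set s := Real.sqrt (1 / 27 + y ^ 2 / 4) with hs
  have hspos : 0 < s := bw_s_pos y
  have hsum : (A + B) ^ 3 = 2 * s + (A + B) := by
    have e : (A + B) ^ 3 = A ^ 3 + B ^ 3 + 3 * (A * B) * (A + B) := by ring
    rw [e, hA3, hB3, hAB]; ring
  have hden : (1 + 3 * (A - B) ^ 2) * (A + B) = 6 * s := by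
    have h1 : 1 + 3 * (A - B) ^ 2 = 3 * (A + B) ^ 2 - 3 := by
      linear_combination (-12 : ℝ) * hAB
    rw [h1]
    linear_combination (3 : ℝ) * hsum
  have hABpos : 0 < A + B := by linarith
  have hdpos : 0 < 1 + 3 * (A - B) ^ 2 := by positivity
  have key : (A + B) / (6 * s) = 1 / (1 + 3 * (A - B) ^ 2) := by
    rw [div_eq_div_iff (by positivity) hdpos.ne']
    linear_combination hden
  rw [key]

/-- Auxiliary estimate: for every nonzero real `y`,
`5/2 + 3 W̄'(y) + (1/(y(1+y²))) (3y/2 + W̄(y)) ≥ y²/(1+y²)`. -/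
theorem burgersW_auxiliary_estimate (y : ℝ) (hy : y ≠ 0) :
    y ^ 2 / (1 + y ^ 2) ≤
      5 / 2 + 3 * deriv burgersW y +
        1 / (y * (1 + y ^ 2)) * (3 * y / 2 + burgersW y) := by
  have hcubic := bw_cubic y
  set w := burgersW y with hw
  have hw0 : w ≠ 0 := by
    intro h
    rw [h] at hcubic
    simp at hcubic
    exact hy hcubic
  have hyw : y = -(w + w ^ 3) := by linarith
  rw [bw_deriv y, ← hw, hyw]
  have hu : (0:ℝ) < 1 + w ^ 2 := by positivity
  have hs : (0:ℝ) < 1 + 3 * w ^ 2 := by positivity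
  have ht : (0:ℝ) < 1 + (-(w + w ^ 3)) ^ 2 := by positivity
  have hww : w + w ^ 3 ≠ 0 := by
    intro h
    apply hw0
    nlinarith [sq_nonneg w]
  have third : 1 / (-(w + w ^ 3) * (1 + (-(w + w ^ 3)) ^ 2)) * (3 * (-(w + w ^ 3)) / 2 + w)
      = (1 + 3 * w ^ 2) / (2 * (1 + w ^ 2) * (1 + (-(w + w ^ 3)) ^ 2)) := by
    have hden1 : -(w + w ^ 3) * (1 + (-(w + w ^ 3)) ^ 2) ≠ 0 :=
      mul_ne_zero (neg_ne_zero.mpr hww) ht.ne'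
    rw [div_mul_eq_mul_div, one_mul, div_eq_div_iff hden1 (by positivity)]
    ring
  rw [third]
  have poly : (0:ℝ) ≤ w ^ 2 * (9 * w ^ 8 + 24 * w ^ 6 + 18 * w ^ 4 + 24 * w ^ 2 + 17) := by
    positivity
  have diff : (5 / 2 + 3 * -(1 / (1 + 3 * w ^ 2))
        + (1 + 3 * w ^ 2) / (2 * (1 + w ^ 2) * (1 + (-(w + w ^ 3)) ^ 2)))
      - (-(w + w ^ 3)) ^ 2 / (1 + (-(w + w ^ 3)) ^ 2)
      = (w ^ 2 * (9 * w ^ 8 + 24 * w ^ 6 + 18 * w ^ 4 + 24 * w ^ 2 + 17))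
        / (2 * (1 + 3 * w ^ 2) * (1 + w ^ 2) * (1 + (-(w + w ^ 3)) ^ 2)) := by
    field_simp
    ring
  have hpos : (0:ℝ) ≤ (w ^ 2 * (9 * w ^ 8 + 24 * w ^ 6 + 18 * w ^ 4 + 24 * w ^ 2 + 17))
        / (2 * (1 + 3 * w ^ 2) * (1 + w ^ 2) * (1 + (-(w + w ^ 3)) ^ 2)) := by
    positivity
  linarith [diff, hpos]
end

section
/- There exists a constant \(C > 0\) such that for every \(\epsilon \in (0,1]\) and every \(s_* \in \mathbb{R}\), \(\int_{-\ln \epsilon}^{\infty} \big(1 + |e^{s/2} - e^{s_*/2}|\big)^{-2/3}\, ds \le C\). -/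
open MeasureTheory

lemma aux_integrable_exp_abs : Integrable (fun x : ℝ => Real.exp (-|x| / 3)) := by
  have hIoi : IntegrableOn (fun x : ℝ => Real.exp (-|x| / 3)) (Set.Ioi 0) := by
    have h := exp_neg_integrableOn_Ioi (0 : ℝ) (by norm_num : (0:ℝ) < 3⁻¹)
    refine h.congr_fun (fun x hx => ?_) measurableSet_Ioi
    rw [abs_of_pos hx]; ring_nf
  have hIic : IntegrableOn (fun x : ℝ => Real.exp (-|x| / 3)) (Set.Iic 0) := by
    rw [← Measure.map_neg_eq_self (volume : Measure ℝ)]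
    have m : MeasurableEmbedding fun x : ℝ => -x := (Homeomorph.neg ℝ).measurableEmbedding
    rw [m.integrableOn_map_iff]
    simp_rw [Function.comp_def, abs_neg, Set.neg_preimage, Set.neg_Iic, neg_zero]
    exact Iff.mpr integrableOn_Ici_iff_integrableOn_Ioi hIoi
  have : IntegrableOn (fun x : ℝ => Real.exp (-|x| / 3)) (Set.Iic 0 ∪ Set.Ioi 0) :=
    hIic.union hIoi
  rw [Set.Iic_union_Ioi] at this
  exact integrableOn_univ.mp this

lemma aux_integral_exp_abs : ∫ x : ℝ, Real.exp (-|x| / 3) = 6 := by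
  have h1 : ∫ x : ℝ, Real.exp (-|x| / 3) = 2 * ∫ x in Set.Ioi (0:ℝ), Real.exp (-x / 3) :=
    integral_comp_abs (f := fun x => Real.exp (-x / 3))
  have h2 : ∫ x in Set.Ioi (0:ℝ), Real.exp (-x / 3) = 3 := by
    have h3 : ∫ x in Set.Ioi (0:ℝ), Real.exp (-(3⁻¹ * x)) =
        (3⁻¹:ℝ)⁻¹ • ∫ x in Set.Ioi ((3:ℝ)⁻¹ * 0), Real.exp (-x) :=
      integral_comp_mul_left_Ioi (fun x => Real.exp (-x)) 0 (by norm_num : (0:ℝ) < 3⁻¹)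
    have h4 : ∀ x : ℝ, Real.exp (-x / 3) = Real.exp (-(3⁻¹ * x)) := fun x => by ring_nf
    simp only [h4]
    rw [h3, mul_zero, integral_exp_neg_Ioi, neg_zero, Real.exp_zero]
    norm_num
  rw [h1, h2]; norm_num

/-- There is a constant `C > 0` such that for every `ε ∈ (0,1]` and every `s⋆ ∈ ℝ`,
`∫_{-ln ε}^∞ (1 + |e^{s/2} - e^{s⋆/2}|)^(-2/3) ds ≤ C`
(as a Lebesgue integral of a nonnegative function over the half-line). -/
theorem integral_exp_shift_bound :
    ∃ C : ℝ, 0 < C ∧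
      ∀ ε : ℝ, 0 < ε → ε ≤ 1 → ∀ sStar : ℝ,
        ∫⁻ s in Set.Ici (-Real.log ε),
            ENNReal.ofReal
              ((1 + |Real.exp (s / 2) - Real.exp (sStar / 2)|) ^ (-(2 : ℝ) / 3)) ≤
          ENNReal.ofReal C := by
  refine ⟨6, by norm_num, fun ε hε hε1 sStar => ?_⟩
  set t : ℝ := max sStar 0 with ht
  -- pointwise bound for s ≥ 0
  have key : ∀ s : ℝ, 0 ≤ s →
      (1 + |Real.exp (s / 2) - Real.exp (sStar / 2)|) ^ (-(2:ℝ) / 3) ≤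
        Real.exp (-|s - t| / 3) := by
    intro s hs
    have hA : Real.exp (|s - t| / 2) ≤ 1 + |Real.exp (s / 2) - Real.exp (sStar / 2)| := by
      have hes : (1:ℝ) ≤ Real.exp (s / 2) := by
        rw [← Real.exp_zero]; exact Real.exp_le_exp.mpr (by linarith)
      rcases le_or_gt sStar 0 with hst | hst
      · have ht0 : t = 0 := max_eq_right hst
        rw [ht0, sub_zero, abs_of_nonneg hs]
        have h1 : Real.exp (sStar / 2) ≤ 1 := by
          rw [← Real.exp_zero]; exact Real.exp_le_exp.mpr (by linarith)
        have h2 : Real.exp (sStar / 2) ≤ Real.exp (s / 2) := le_trans h1 hes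
        rw [abs_of_nonneg (by linarith)]
        linarith
      · have ht0 : t = sStar := max_eq_left hst.le
        rw [ht0]
        have hest : (1:ℝ) ≤ Real.exp (sStar / 2) := by
          rw [← Real.exp_zero]; exact Real.exp_le_exp.mpr (by linarith)
        rcases le_total sStar s with hc | hc
        · rw [abs_of_nonneg (by linarith : (0:ℝ) ≤ s - sStar)]
          have hmul : Real.exp (s / 2) = Real.exp (sStar / 2) * Real.exp ((s - sStar) / 2) := by
            rw [← Real.exp_add]; ring_nf
          have h2 : Real.exp (sStar / 2) ≤ Real.exp (s / 2) :=
            Real.exp_le_exp.mpr (by linarith)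
          rw [abs_of_nonneg (by linarith)]
          have h3 : (1:ℝ) ≤ Real.exp ((s - sStar) / 2) := by
            rw [← Real.exp_zero]; exact Real.exp_le_exp.mpr (by linarith)
          nlinarith
        · rw [abs_of_nonpos (by linarith : s - sStar ≤ 0)]
          have hmul : Real.exp (sStar / 2) = Real.exp (s / 2) * Real.exp ((sStar - s) / 2) := by
            rw [← Real.exp_add]; ring_nf
          have h2 : Real.exp (s / 2) ≤ Real.exp (sStar / 2) :=
            Real.exp_le_exp.mpr (by linarith)
          rw [abs_of_nonpos (by linarith), neg_sub]
          have h3 : (1:ℝ) ≤ Real.exp ((sStar - s) / 2) := by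
            rw [← Real.exp_zero]; exact Real.exp_le_exp.mpr (by linarith)
          nlinarith
    have hApos : (0:ℝ) < Real.exp (|s - t| / 2) := Real.exp_pos _
    have h1 : (1 + |Real.exp (s / 2) - Real.exp (sStar / 2)|) ^ (-(2:ℝ) / 3) ≤
        (Real.exp (|s - t| / 2)) ^ (-(2:ℝ) / 3) :=
      Real.rpow_le_rpow_of_nonpos hApos hA (by norm_num)
    refine h1.trans_eq ?_
    rw [Real.rpow_def_of_pos hApos, Real.log_exp]
    congr 1; ring
  -- monotonicity of the domain and the bound
  have hlog : Real.log ε ≤ 0 := Real.log_nonpos hε.le hε1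
  calc
    ∫⁻ s in Set.Ici (-Real.log ε),
        ENNReal.ofReal ((1 + |Real.exp (s / 2) - Real.exp (sStar / 2)|) ^ (-(2:ℝ) / 3))
      ≤ ∫⁻ s in Set.Ici (0:ℝ),
        ENNReal.ofReal ((1 + |Real.exp (s / 2) - Real.exp (sStar / 2)|) ^ (-(2:ℝ) / 3)) := by
        exact lintegral_mono_set (Set.Ici_subset_Ici.mpr (by linarith))
    _ ≤ ∫⁻ s in Set.Ici (0:ℝ), ENNReal.ofReal (Real.exp (-|s - t| / 3)) := by
        refine setLIntegral_mono (by fun_prop) (fun s hs => ?_)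
        exact ENNReal.ofReal_le_ofReal (key s hs)
    _ ≤ ∫⁻ s : ℝ, ENNReal.ofReal (Real.exp (-|s - t| / 3)) :=
        setLIntegral_le_lintegral _ _
    _ = ENNReal.ofReal (∫ s : ℝ, Real.exp (-|s - t| / 3)) := by
        rw [← ofReal_integral_eq_lintegral_ofReal]
        · exact aux_integrable_exp_abs.comp_sub_right t
        · exact Filter.Eventually.of_forall fun x => (Real.exp_pos _).le
    _ = ENNReal.ofReal 6 := by
        rw [integral_sub_right_eq_self (fun s : ℝ => Real.exp (-|s| / 3)) t,
          aux_integral_exp_abs]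
end

section
/- Let \(0 < l \le 1\) and \(s_0 \in \mathbb{R}\). Then for every \(s \ge s_0\), \(\int_{s_0}^{s} \big(1 + l^2\, e^{\,s' - s_0}\big)^{-1/3}\, ds' \le 2 \ln\tfrac{1}{l} + 3\). -/
/-- For `0 < l ≤ 1` and any `s ≥ s₀`,
`∫_{s₀}^s (1 + l² e^{s'-s₀})^(-1/3) ds' ≤ 2 ln(1/l) + 3`. -/
theorem integral_exp_decay_bound (l s₀ : ℝ) (hl0 : 0 < l) (hl1 : l ≤ 1) :
    ∀ s : ℝ, s₀ ≤ s →
      (∫ s' in s₀..s, (1 + l ^ 2 * Real.exp (s' - s₀)) ^ (-(1 : ℝ) / 3)) ≤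
        2 * Real.log (1 / l) + 3 := by
  intro s hs
  set f : ℝ → ℝ := fun t => (1 + l ^ 2 * Real.exp (t - s₀)) ^ (-(1 : ℝ) / 3) with hf
  have hlog : 0 ≤ Real.log (1 / l) := Real.log_nonneg (by
    rw [le_div_iff₀ hl0]; linarith)
  have hbase : ∀ t : ℝ, (1:ℝ) ≤ 1 + l ^ 2 * Real.exp (t - s₀) := by
    intro t
    nlinarith [Real.exp_pos (t - s₀), sq_nonneg l]
  have hcont : Continuous f := by
    apply Continuous.rpow_const
    · continuity
    · intro t; left; nlinarith [hbase t]
  have hfle1 : ∀ t : ℝ, f t ≤ 1 := fun t =>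
    Real.rpow_le_one_of_one_le_of_nonpos (hbase t) (by norm_num)
  have hf0 : ∀ t : ℝ, 0 ≤ f t := fun t =>
    Real.rpow_nonneg (by linarith [hbase t]) _
  set s₁ : ℝ := s₀ + 2 * Real.log (1 / l) with hs₁
  have hint : ∀ a b : ℝ, IntervalIntegrable f MeasureTheory.volume a b :=
    fun a b => hcont.intervalIntegrable a b
  have hhead : ∀ b : ℝ, s₀ ≤ b → b ≤ s₁ →
      (∫ t in s₀..b, f t) ≤ 2 * Real.log (1 / l) := by
    intro b hb hb1
    calc (∫ t in s₀..b, f t) ≤ ∫ _ in s₀..b, (1:ℝ) := by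
          apply intervalIntegral.integral_mono_on hb (hint s₀ b)
            (intervalIntegrable_const)
          intro t _; exact hfle1 t
      _ = b - s₀ := by simp
      _ ≤ 2 * Real.log (1 / l) := by simp [hs₁] at hb1 ⊢; linarith
  rcases le_total s s₁ with h | h
  · have := hhead s hs h
    linarith
  · -- split at s₁
    have hs0s1 : s₀ ≤ s₁ := by rw [hs₁]; linarith
    have hsplit : (∫ t in s₀..s, f t) =
        (∫ t in s₀..s₁, f t) + ∫ t in s₁..s, f t :=
      (intervalIntegral.integral_add_adjacent_intervals (hint s₀ s₁) (hint s₁ s)).symm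
    -- bound the tail
    have hexp_eq : ∀ t : ℝ, l ^ 2 * Real.exp (t - s₀) = Real.exp (t - s₁) := by
      intro t
      have h1 : Real.exp (t - s₀) = Real.exp (t - s₁) * Real.exp (2 * Real.log (1/l)) := by
        rw [← Real.exp_add, hs₁]; ring_nf
      have h2 : Real.exp (2 * Real.log (1/l)) = (1/l) ^ 2 := by
        rw [show (2:ℝ) * Real.log (1/l) = Real.log (1/l) + Real.log (1/l) by ring,
          Real.exp_add, Real.exp_log (by positivity), sq]
      rw [h1, h2]
      field_simp
    have htail_le : ∀ t : ℝ, f t ≤ Real.exp (-(t - s₁) / 3) := by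
      intro t
      have h1 : Real.exp (t - s₁) ≤ 1 + l ^ 2 * Real.exp (t - s₀) := by
        rw [hexp_eq t]; linarith [Real.exp_pos (t - s₁)]
      have h2 : f t ≤ Real.exp (t - s₁) ^ (-(1:ℝ)/3) :=
        Real.rpow_le_rpow_of_nonpos (Real.exp_pos _) h1 (by norm_num)
      refine h2.trans_eq ?_
      rw [Real.rpow_def_of_pos (Real.exp_pos _), Real.log_exp]
      ring_nf
    -- antiderivative for the exponential bound
    have hderiv : ∀ t : ℝ, HasDerivAt (fun t => -3 * Real.exp (-(t - s₁) / 3))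
        (Real.exp (-(t - s₁) / 3)) t := by
      intro t
      have h1 : HasDerivAt (fun t : ℝ => -(t - s₁) / 3) (-1/3) t := by
        have := ((hasDerivAt_id t).sub_const s₁).neg.div_const 3
        simpa using this
      have h2 := (h1.exp).const_mul (-3 : ℝ)
      refine h2.congr_deriv ?_
      ring
    have hexp_int : (∫ t in s₁..s, Real.exp (-(t - s₁) / 3)) =
        -3 * Real.exp (-(s - s₁) / 3) - (-3 * Real.exp (-(s₁ - s₁) / 3)) := by
      exact intervalIntegral.integral_eq_sub_of_hasDerivAt
        (fun t _ => hderiv t)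
        ((Real.continuous_exp.comp (by continuity)).intervalIntegrable s₁ s)
    have htail : (∫ t in s₁..s, f t) ≤ 3 := by
      calc (∫ t in s₁..s, f t) ≤ ∫ t in s₁..s, Real.exp (-(t - s₁) / 3) := by
            apply intervalIntegral.integral_mono_on h (hint s₁ s)
              ((Real.continuous_exp.comp (by continuity)).intervalIntegrable s₁ s)
            intro t _; exact htail_le t
        _ = -3 * Real.exp (-(s - s₁) / 3) + 3 := by
            rw [hexp_int, sub_self, neg_zero, zero_div, Real.exp_zero]; ring
        _ ≤ 3 := by nlinarith [Real.exp_pos (-(s - s₁) / 3)]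
    have hh := hhead s₁ hs0s1 le_rfl
    rw [hsplit]
    linarith
end

section
/- Let \(\alpha > 0\), \(T > 0\), and let \(u : \mathbb{R} \times [0,T] \to \mathbb{R}\) be continuously differentiable with u and \(\partial_x u\) bounded. Let \(q : \mathbb{R} \times [0,T] \to \mathbb{R}\) be continuously differentiable, strictly positive, and satisfy the continuity-type equation \(\partial_t q + u\,\partial_x q + \alpha\, q\,\partial_x u = 0\) on \(\mathbb{R} \times [0,T]\). Suppose there are constants \(0 < m \le M_0\) with \(m \le q(y,0) \le M_0\) for all \(y \in \mathbb{R}\). Then, setting \(A(t) = \int_0^t \sup_{x \in \mathbb{R}} |\partial_x u(x,r)|\, dr\), one has for every \((x,t) \in \mathbb{R} \times [0,T]\): \(m\, e^{-\alpha A(t)} \le q(x,t) \le M_0\, e^{\alpha A(t)}\). -/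
open Set

/-- Partial derivative in the first coordinate from a `HasFDerivWithinAt` on `univ ×ˢ s`. -/
lemma sliceFst_hasDerivAt {F : ℝ × ℝ → ℝ} {s : Set ℝ} {D : (ℝ × ℝ) →L[ℝ] ℝ} {x t : ℝ}
    (hF : HasFDerivWithinAt F D (univ ×ˢ s) (x, t)) (ht : t ∈ s) :
    HasDerivAt (fun x' => F (x', t)) (D (1, 0)) x := by
  have hline : HasDerivAt (fun x' : ℝ => ((x', t) : ℝ × ℝ)) ((1 : ℝ), (0 : ℝ)) x :=
    HasDerivAt.prodMk (hasDerivAt_id x) (hasDerivAt_const x t)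
  have := HasFDerivWithinAt.comp_hasDerivWithinAt (x := x) hF (hline.hasDerivWithinAt (s := univ))
    (fun y _ => (⟨trivial, ht⟩ : (y, t) ∈ univ ×ˢ s))
  rw [hasDerivWithinAt_univ] at this
  exact this

/-- Partial derivative in the second coordinate from a genuine `HasFDerivAt`. -/
lemma sliceSnd_hasDerivAt {F : ℝ × ℝ → ℝ} {D : (ℝ × ℝ) →L[ℝ] ℝ} {x t : ℝ}
    (hF : HasFDerivAt F D (x, t)) :
    HasDerivAt (fun t' => F (x, t')) (D (0, 1)) t := by
  have hline : HasDerivAt (fun t' : ℝ => ((x, t') : ℝ × ℝ)) ((0 : ℝ), (1 : ℝ)) t :=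
    HasDerivAt.prodMk (hasDerivAt_const t x) (hasDerivAt_id t)
  exact hF.comp_hasDerivAt t hline

lemma sliceFst_hasDerivAt' {F : ℝ × ℝ → ℝ} {D : (ℝ × ℝ) →L[ℝ] ℝ} {x t : ℝ}
    (hF : HasFDerivAt F D (x, t)) :
    HasDerivAt (fun x' => F (x', t)) (D (1, 0)) x := by
  have hline : HasDerivAt (fun x' : ℝ => ((x', t) : ℝ × ℝ)) ((1 : ℝ), (0 : ℝ)) x :=
    HasDerivAt.prodMk (hasDerivAt_id x) (hasDerivAt_const x t)
  exact hF.comp_hasDerivAt x hline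

/-- A continuous function bounded above has the same supremum over `ℝ` and over `ℚ`. -/
lemma ciSup_eq_ciSup_rat {f : ℝ → ℝ} (hf : Continuous f) {B : ℝ} (hB : ∀ x, f x ≤ B) :
    (⨆ x : ℝ, f x) = ⨆ n : ℚ, f n := by
  have bdd2 : BddAbove (range fun n : ℚ => f n) := ⟨B, by rintro _ ⟨n, rfl⟩; exact hB n⟩
  have bdd1 : BddAbove (range f) := ⟨B, by rintro _ ⟨x, rfl⟩; exact hB x⟩
  refine le_antisymm (ciSup_le fun x => ?_) (ciSup_le fun n => le_ciSup bdd1 (n : ℝ))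
  obtain ⟨sq, hsq, hlim⟩ := mem_closure_iff_seq_limit.1
    (by rw [Rat.denseRange_cast.closure_eq]; exact mem_univ x : x ∈ closure (range ((↑) : ℚ → ℝ)))
  have : Filter.Tendsto (fun k => f (sq k)) Filter.atTop (nhds (f x)) :=
    (hf.continuousAt).tendsto.comp hlim
  refine le_of_tendsto this (Filter.Eventually.of_forall fun k => ?_)
  obtain ⟨n, hn⟩ := hsq k
  rw [← hn]
  exact le_ciSup bdd2 n

/-- Along-characteristics bounds for the continuity-type equation
`∂ₜ q + u ∂ₓ q + α q ∂ₓ u = 0` on `ℝ × [0,T]`: if `q > 0` and `m ≤ q(·,0) ≤ M₀`, then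
with `A(t) = ∫₀ᵗ sup_x |∂ₓ u(x,r)| dr`, one has
`m e^{-α A(t)} ≤ q(x,t) ≤ M₀ e^{α A(t)}` for all `x` and `t ∈ [0,T]`. -/
theorem continuity_equation_density_bounds
    (α T : ℝ) (hα : 0 < α) (hT : 0 < T)
    (u q : ℝ → ℝ → ℝ)
    (hu : ContDiffOn ℝ 1 (fun p : ℝ × ℝ => u p.1 p.2) (univ ×ˢ Icc 0 T))
    (huBdd : ∃ B : ℝ, ∀ x t : ℝ, t ∈ Icc 0 T →
      |u x t| ≤ B ∧ |deriv (fun x' => u x' t) x| ≤ B)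
    (hq : ContDiffOn ℝ 1 (fun p : ℝ × ℝ => q p.1 p.2) (univ ×ˢ Icc 0 T))
    (hqpos : ∀ x t : ℝ, t ∈ Icc 0 T → 0 < q x t)
    (hPDE : ∀ x t : ℝ, t ∈ Icc 0 T →
      deriv (fun t' => q x t') t + u x t * deriv (fun x' => q x' t) x +
          α * q x t * deriv (fun x' => u x' t) x = 0)
    (m M₀ : ℝ) (hm : 0 < m) (hmM : m ≤ M₀)
    (hq0 : ∀ y : ℝ, m ≤ q y 0 ∧ q y 0 ≤ M₀) :
    ∀ x t : ℝ, t ∈ Icc 0 T →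
      m * Real.exp (-α * ∫ r in (0:ℝ)..t, ⨆ x' : ℝ, |deriv (fun x'' => u x'' r) x'|) ≤
          q x t ∧
        q x t ≤
          M₀ * Real.exp (α * ∫ r in (0:ℝ)..t, ⨆ x' : ℝ, |deriv (fun x'' => u x'' r) x'|) := by
  classical
  obtain ⟨B, hB⟩ := huBdd
  have h0T : (0:ℝ) ∈ Icc (0:ℝ) T := ⟨le_rfl, hT.le⟩
  have hB0 : 0 ≤ B := le_trans (abs_nonneg _) (hB 0 0 h0T).1
  set S : Set (ℝ × ℝ) := univ ×ˢ Icc 0 T with hSdef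
  have hUD : UniqueDiffOn ℝ S := uniqueDiffOn_univ.prod (uniqueDiffOn_Icc hT)
  have hmemS : ∀ x t : ℝ, t ∈ Icc 0 T → ((x, t) : ℝ × ℝ) ∈ S := fun x t ht => ⟨mem_univ x, ht⟩
  set U : ℝ × ℝ → ℝ := fun p => u p.1 p.2 with hUdef
  set Q : ℝ × ℝ → ℝ := fun p => q p.1 p.2 with hQdef
  set DU : ℝ × ℝ → (ℝ × ℝ) →L[ℝ] ℝ := fderivWithin ℝ U S with hDUdef
  set DQ : ℝ × ℝ → (ℝ × ℝ) →L[ℝ] ℝ := fderivWithin ℝ Q S with hDQdef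
  have hUdiff : ∀ p ∈ S, HasFDerivWithinAt U (DU p) S p := fun p hp =>
    ((hu.differentiableOn one_ne_zero) p hp).hasFDerivWithinAt
  have hQdiff : ∀ p ∈ S, HasFDerivWithinAt Q (DQ p) S p := fun p hp =>
    ((hq.differentiableOn one_ne_zero) p hp).hasFDerivWithinAt
  -- spatial derivative of u is genuine, and continuous on S
  have hux : ∀ x t : ℝ, t ∈ Icc 0 T →
      HasDerivAt (fun x' => u x' t) (DU (x, t) (1, 0)) x := fun x t ht =>
    sliceFst_hasDerivAt (hUdiff _ (hmemS x t ht)) ht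
  have hux_eq : ∀ x t : ℝ, t ∈ Icc 0 T →
      deriv (fun x' => u x' t) x = DU (x, t) (1, 0) := fun x t ht => (hux x t ht).deriv
  set pd : ℝ × ℝ → ℝ := fun p => deriv (fun x'' => u x'' p.2) p.1 with hpddef
  have hDUc : ContinuousOn DU S := hu.continuousOn_fderivWithin hUD le_rfl
  have hpd_cont : ContinuousOn pd S := by
    have : ContinuousOn (fun p : ℝ × ℝ => DU p (1, 0)) S := hDUc.clm_apply continuousOn_const
    exact this.congr fun p hp => by
      simpa using hux_eq p.1 p.2 hp.2
  -- Lipschitz in space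
  have hlip : ∀ t ∈ Icc (0:ℝ) T, LipschitzWith B.toNNReal (fun x => u x t) := by
    intro t ht
    refine lipschitzWith_of_nnnorm_deriv_le (fun x => (hux x t ht).differentiableAt) fun x => ?_
    rw [← NNReal.coe_le_coe, coe_nnnorm, Real.coe_toNNReal _ hB0, Real.norm_eq_abs]
    exact (hB x t ht).2
  -- continuity of u, q on S
  have hUc : ContinuousOn U S := hu.continuousOn
  have hQc : ContinuousOn Q S := hq.continuousOn
  -- facts about the supremum Su
  set Su : ℝ → ℝ := fun r => ⨆ x' : ℝ, |deriv (fun x'' => u x'' r) x'| with hSudef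
  have bddA : ∀ r ∈ Icc (0:ℝ) T,
      BddAbove (range fun x' : ℝ => |deriv (fun x'' => u x'' r) x'|) := fun r hr =>
    ⟨B, by rintro _ ⟨x', rfl⟩; exact (hB x' r hr).2⟩
  have habs_le_Su : ∀ r ∈ Icc (0:ℝ) T, ∀ x : ℝ,
      |deriv (fun x'' => u x'' r) x| ≤ Su r := fun r hr x => le_ciSup (bddA r hr) x
  have hSu_le_B : ∀ r ∈ Icc (0:ℝ) T, Su r ≤ B := fun r hr =>
    ciSup_le fun x' => (hB x' r hr).2
  have hSu_nonneg : ∀ r ∈ Icc (0:ℝ) T, 0 ≤ Su r := fun r hr =>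
    le_trans (abs_nonneg _) (habs_le_Su r hr 0)
  -- Su equals a countable supremum on [0,T]
  have hpd_slice_cont : ∀ c : ℝ, ContinuousOn (fun r => pd (c, r)) (Icc 0 T) := by
    intro c
    exact hpd_cont.comp (continuousOn_const.prodMk continuousOn_id) fun r hr => ⟨mem_univ _, hr⟩
  have hSu_eq : ∀ r ∈ Icc (0:ℝ) T, Su r = ⨆ n : ℚ, |pd ((n:ℝ), r)| := by
    intro r hr
    have hc : Continuous (fun x : ℝ => |pd (x, r)|) := by
      have : ContinuousOn (fun x : ℝ => pd (x, r)) univ :=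
        hpd_cont.comp (continuousOn_id.prodMk continuousOn_const) fun x _ => ⟨mem_univ _, hr⟩
      exact (continuousOn_univ.1 this).abs
    exact ciSup_eq_ciSup_rat hc (B := B) fun x => (hB x r hr).2
  -- integrability of Su on subintervals of [0,T]
  have hSuInt : ∀ b ∈ Icc (0:ℝ) T, IntervalIntegrable Su MeasureTheory.volume 0 b := by
    intro b hb
    have hsub : Icc (0:ℝ) b ⊆ Icc 0 T := Icc_subset_Icc le_rfl hb.2
    have hmeas : AEMeasurable (fun r => ⨆ n : ℚ, |pd ((n:ℝ), r)|)
        (MeasureTheory.volume.restrict (Icc (0:ℝ) b)) := by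
      refine AEMeasurable.iSup fun n => ?_
      exact (((hpd_slice_cont (n:ℝ)).mono hsub).abs).aemeasurable measurableSet_Icc
    have hint : MeasureTheory.IntegrableOn (fun r => ⨆ n : ℚ, |pd ((n:ℝ), r)|)
        (Icc (0:ℝ) b) MeasureTheory.volume := by
      refine MeasureTheory.Integrable.mono' (g := fun _ => B)
        (MeasureTheory.integrableOn_const measure_Icc_lt_top.ne)
        hmeas.aestronglyMeasurable ?_
      filter_upwards [MeasureTheory.ae_restrict_mem measurableSet_Icc] with r hr
      have hrT : r ∈ Icc (0:ℝ) T := hsub hr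
      rw [← hSu_eq r hrT, Real.norm_eq_abs, abs_of_nonneg (hSu_nonneg r hrT)]
      exact hSu_le_B r hrT
    have hintSu : MeasureTheory.IntegrableOn Su (Icc (0:ℝ) b) MeasureTheory.volume :=
      hint.congr_fun (fun r hr => (hSu_eq r (hsub hr)).symm) measurableSet_Icc
    exact (intervalIntegrable_iff_integrableOn_Icc_of_le hb.1).2 hintSu
  -- main argument
  intro x₀ t₀ ht₀
  rcases eq_or_lt_of_le ht₀.1 with h0 | h0
  · -- t₀ = 0
    rw [← h0]
    simp only [intervalIntegral.integral_same, mul_zero, Real.exp_zero, mul_one]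
    exact hq0 x₀
  -- t₀ > 0
  have hsub : Icc (0:ℝ) t₀ ⊆ Icc 0 T := Icc_subset_Icc le_rfl ht₀.2
  -- characteristic through (x₀, t₀)
  have hPL : IsPicardLindelof (fun s y => u y s) (tmin := 0) (tmax := t₀) ⟨t₀, h0.le, le_rfl⟩ x₀
      (B * t₀).toNNReal 0 B.toNNReal B.toNNReal :=
    { lipschitzOnWith := fun s hs => (hlip s (hsub hs)).lipschitzOnWith
      continuousOn := fun y _ => hUc.comp (continuousOn_const.prodMk continuousOn_id)
        fun s hs => ⟨mem_univ _, hsub hs⟩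
      norm_le := fun s hs y _ => by
        rw [Real.norm_eq_abs, Real.coe_toNNReal _ hB0]; exact (hB y s (hsub hs)).1
      mul_max_le := by
        simp [Real.coe_toNNReal _ hB0, Real.coe_toNNReal _ (mul_nonneg hB0 h0.le), max_eq_right h0.le] }
  obtain ⟨X, hX0, hX⟩ := hPL.exists_eq_forall_mem_Icc_hasDerivWithinAt₀
  replace hX0 : X t₀ = x₀ := hX0
  have hXc : ContinuousOn X (Icc 0 t₀) := fun s hs => (hX s hs).continuousWithinAt
  have hγmaps : ∀ s ∈ Icc (0:ℝ) t₀, ((X s, s) : ℝ × ℝ) ∈ S := fun s hs =>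
    ⟨mem_univ _, hsub hs⟩
  set w : ℝ → ℝ := fun s => pd (X s, s) with hwdef
  have hwc : ContinuousOn w (Icc 0 t₀) :=
    hpd_cont.comp (hXc.prodMk continuousOn_id) hγmaps
  have hwInt : ∀ b ∈ Icc (0:ℝ) t₀, IntervalIntegrable w MeasureTheory.volume 0 b := by
    intro b hb
    apply ContinuousOn.intervalIntegrable
    rw [uIcc_of_le hb.1]
    exact hwc.mono (Icc_subset_Icc le_rfl hb.2)
  set E : ℝ → ℝ := fun r => ∫ s in (0:ℝ)..r, w s with hEdef
  have hEc : ContinuousOn E (Icc 0 t₀) := by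
    have := intervalIntegral.continuousOn_primitive_interval
      (a := (0:ℝ)) (b := t₀) (f := w) (μ := MeasureTheory.volume) ?_
    · rwa [uIcc_of_le h0.le] at this
    · rw [uIcc_of_le h0.le]
      exact (intervalIntegrable_iff_integrableOn_Icc_of_le h0.le).1 (hwInt t₀ ⟨h0.le, le_rfl⟩)
  have hE' : ∀ r ∈ Ioo (0:ℝ) t₀, HasDerivAt E (w r) r := by
    intro r hr
    refine intervalIntegral.integral_hasDerivAt_right (hwInt r (Ioo_subset_Icc_self hr)) ?_ ?_
    · exact ((hwc.mono Ioo_subset_Icc_self).stronglyMeasurableAtFilter isOpen_Ioo) r hr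
    · exact hwc.continuousAt (Icc_mem_nhds hr.1 hr.2)
  -- the density along the characteristic
  set g : ℝ → ℝ := fun s => q (X s) s with hgdef
  have hgc : ContinuousOn g (Icc 0 t₀) :=
    hQc.comp (hXc.prodMk continuousOn_id) hγmaps
  have hg' : ∀ r ∈ Ioo (0:ℝ) t₀, HasDerivAt g (-(α * w r) * g r) r := by
    intro r hr
    have hrI : r ∈ Icc (0:ℝ) t₀ := Ioo_subset_Icc_self hr
    have hrT : r ∈ Icc (0:ℝ) T := hsub hrI
    have hnhds : S ∈ nhds ((X r, r) : ℝ × ℝ) := by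
      rw [hSdef]
      exact prod_mem_nhds Filter.univ_mem
        (Icc_mem_nhds hr.1 (lt_of_lt_of_le hr.2 ht₀.2))
    have hQat : HasFDerivAt Q (DQ (X r, r)) (X r, r) :=
      (hQdiff _ (hγmaps r hrI)).hasFDerivAt hnhds
    have hγ' : HasDerivAt (fun s => ((X s, s) : ℝ × ℝ)) ((u (X r) r, 1)) r := by
      have := (HasDerivWithinAt.prodMk (hX r hrI) ((hasDerivAt_id r).hasDerivWithinAt)).hasDerivAt
        (Icc_mem_nhds hr.1 hr.2)
      exact this
    have hcomp : HasDerivAt g (DQ (X r, r) (u (X r) r, 1)) r :=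
      HasFDerivAt.comp_hasDerivAt (l := Q) (f := fun s => ((X s, s) : ℝ × ℝ)) r hQat hγ'
    have h1 : deriv (fun x' => q x' r) (X r) = DQ (X r, r) (1, 0) :=
      (sliceFst_hasDerivAt' hQat).deriv
    have h2 : deriv (fun t' => q (X r) t') r = DQ (X r, r) (0, 1) :=
      (sliceSnd_hasDerivAt hQat).deriv
    have hlin : DQ (X r, r) (u (X r) r, 1)
        = u (X r) r * DQ (X r, r) (1, 0) + DQ (X r, r) (0, 1) := by
      have hv : ((u (X r) r, 1) : ℝ × ℝ)
          = u (X r) r • ((1:ℝ), (0:ℝ)) + (1:ℝ) • ((0:ℝ), (1:ℝ)) := by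
        simp [Prod.ext_iff]
      rw [hv, map_add, map_smul, map_smul, smul_eq_mul, smul_eq_mul, one_mul]
    have hpde := hPDE (X r) r hrT
    have hgr : g r = q (X r) r := rfl
    have hwr : w r = deriv (fun x'' => u x'' r) (X r) := rfl
    have : DQ (X r, r) (u (X r) r, 1) = -(α * w r) * g r := by
      rw [hlin, ← h1, ← h2, hgr, hwr]
      linarith [hpde]
    rwa [this] at hcomp
  -- the conserved quantity
  set h : ℝ → ℝ := fun s => g s * Real.exp (α * E s) with hhdef
  have hhc : ContinuousOn h (Icc 0 t₀) :=
    hgc.mul (Real.continuous_exp.comp_continuousOn (continuousOn_const.mul hEc))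
  have hh' : ∀ r ∈ Ioo (0:ℝ) t₀, HasDerivAt h 0 r := by
    intro r hr
    have hexp : HasDerivAt (fun s => Real.exp (α * E s))
        (Real.exp (α * E r) * (α * w r)) r := by
      exact ((hE' r hr).const_mul α).exp
    have := ((hg' r hr).mul hexp : HasDerivAt (fun s => g s * Real.exp (α * E s)) _ r)
    exact this.congr_deriv (by ring)
  have hconst : h t₀ = h 0 := by
    have key : ∀ ε ∈ Ioc (0:ℝ) t₀, h t₀ = h ε := by
      intro ε hε
      have := constant_of_has_deriv_right_zero
        (hhc.mono (Icc_subset_Icc hε.1.le le_rfl))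
        (fun y hy => ((hh' y ⟨lt_of_lt_of_le hε.1 hy.1, hy.2⟩).hasDerivWithinAt))
      exact this t₀ (right_mem_Icc.2 hε.2)
    have hne : (nhdsWithin (0:ℝ) (Ioc 0 t₀)).NeBot := by
      rw [mem_closure_iff_nhdsWithin_neBot.symm, closure_Ioc h0.ne]
      exact left_mem_Icc.2 h0.le
    have h1 : Filter.Tendsto h (nhdsWithin (0:ℝ) (Ioc 0 t₀)) (nhds (h 0)) :=
      ((hhc 0 (left_mem_Icc.2 h0.le)).mono Ioc_subset_Icc_self)
    have h2 : Filter.Tendsto h (nhdsWithin (0:ℝ) (Ioc 0 t₀)) (nhds (h t₀)) := by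
      refine Filter.Tendsto.congr' ?_ tendsto_const_nhds
      filter_upwards [self_mem_nhdsWithin] with ε hε
      exact key ε hε
    exact tendsto_nhds_unique h2 h1
  -- unpack the conservation law
  have hE0 : E 0 = 0 := intervalIntegral.integral_same
  have hkey : q x₀ t₀ * Real.exp (α * E t₀) = q (X 0) 0 := by
    have h1 : h t₀ = q x₀ t₀ * Real.exp (α * E t₀) := by
      simp only [hhdef, hgdef, hX0]
    have h2 : h 0 = q (X 0) 0 := by
      simp only [hhdef, hgdef, hE0, mul_zero, Real.exp_zero, mul_one]
    rw [← h1, ← h2, hconst]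
  have hg0 := hq0 (X 0)
  have hql : q x₀ t₀ = q (X 0) 0 * Real.exp (-(α * E t₀)) := by
    rw [← hkey, Real.exp_neg]
    field_simp
  -- bounds on E t₀
  set A : ℝ := ∫ r in (0:ℝ)..t₀, Su r with hAdef
  have hEub : E t₀ ≤ A := by
    refine intervalIntegral.integral_mono_on h0.le (hwInt t₀ ⟨h0.le, le_rfl⟩)
      (hSuInt t₀ ht₀) fun r hr => ?_
    exact (le_abs_self _).trans (habs_le_Su r (hsub hr) (X r))
  have hElb : -A ≤ E t₀ := by
    have hneg : (∫ r in (0:ℝ)..t₀, -Su r) ≤ E t₀ := by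
      refine intervalIntegral.integral_mono_on h0.le (hSuInt t₀ ht₀).neg
        (hwInt t₀ ⟨h0.le, le_rfl⟩) fun r hr => ?_
      exact (abs_le.1 (habs_le_Su r (hsub hr) (X r))).1
    rwa [intervalIntegral.integral_neg] at hneg
  have hqX0pos : 0 < q (X 0) 0 := hqpos _ _ h0T
  rw [hql]
  constructor
  · refine mul_le_mul hg0.1 (Real.exp_le_exp.2 ?_) (Real.exp_pos _).le hqX0pos.le
    have := mul_le_mul_of_nonneg_left hEub hα.le
    linarith
  · refine mul_le_mul hg0.2 (Real.exp_le_exp.2 ?_) (Real.exp_pos _).le (hm.trans_le hmM).le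
    have := mul_le_mul_of_nonneg_left hElb hα.le
    linarith
end
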